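/- arXiv:math/0602529 — 3 statements merged into one kernel-verified Lean document; each statement's English description precedes it below -/
import Mathlib

section
/- Fix t > 0. For δ > 0 define τ_δ(s) = min(t, (⌊s/δ⌋ + 1)δ) − s for s ∈ [0, t]. If H : [0, t] → ℝ is measurable with ∫_0^t H_s² ds < ∞, then ∫_0^t (τ_δ(s)/δ) H_s ds → (1/2) ∫_0^t H_s ds as δ → 0⁺. -/
open MeasureTheory Filter Set

set_option maxHeartbeats 1000000

private lemma w_nonneg {t δ s : ℝ} (hδ : 0 < δ) (hst : s ≤ t) :
    0 ≤ (min t (((⌊s / δ⌋ : ℤ) + 1 : ℝ) * δ) - s) / δ := by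
  apply div_nonneg _ hδ.le
  have h1 : s < (((⌊s / δ⌋ : ℤ) : ℝ) + 1) * δ := by
    have h := Int.lt_floor_add_one (s / δ)
    calc s = (s / δ) * δ := by field_simp
      _ < (((⌊s / δ⌋ : ℤ) : ℝ) + 1) * δ := by exact mul_lt_mul_of_pos_right h hδ
  have h2 : s ≤ min t ((((⌊s / δ⌋ : ℤ) : ℝ) + 1) * δ) := le_min hst h1.le
  push_cast at h2 ⊢
  linarith

private lemma w_le_one {t δ : ℝ} (s : ℝ) (hδ : 0 < δ) :
    (min t (((⌊s / δ⌋ : ℤ) + 1 : ℝ) * δ) - s) / δ ≤ 1 := by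
  rw [div_le_one hδ]
  have h1 : ((⌊s / δ⌋ : ℤ) : ℝ) * δ ≤ s := by
    rw [← le_div_iff₀ hδ]; exact Int.floor_le (s / δ)
  have h2 : min t ((((⌊s / δ⌋ : ℤ) : ℝ) + 1) * δ) ≤ (((⌊s / δ⌋ : ℤ) : ℝ) + 1) * δ :=
    min_le_right _ _
  push_cast at h2 ⊢
  nlinarith

private lemma w_meas (t δ : ℝ) :
    Measurable fun s : ℝ => (min t (((⌊s / δ⌋ : ℤ) + 1 : ℝ) * δ) - s) / δ := by
  have h0 : Measurable fun s : ℝ => (⌊s / δ⌋ : ℤ) := (measurable_id.div_const δ).floor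
  have h1 : Measurable fun s : ℝ => ((⌊s / δ⌋ : ℤ) : ℝ) := measurable_from_top.comp h0
  exact ((measurable_const.min ((h1.add_const 1).mul_const δ)).sub measurable_id).div_const δ

private lemma w_int {t δ : ℝ} (hδ : 0 < δ) {f : ℝ → ℝ}
    (hf : IntegrableOn f (Icc 0 t)) :
    IntegrableOn (fun s => ((min t (((⌊s / δ⌋ : ℤ) + 1 : ℝ) * δ) - s) / δ) * f s) (Icc 0 t) := by
  apply Integrable.bdd_mul (c := 1) hf ((w_meas t δ).aestronglyMeasurable)
  rw [ae_restrict_iff' measurableSet_Icc]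
  filter_upwards with s hs
  rw [Real.norm_eq_abs, abs_le]
  exact ⟨by linarith [w_nonneg hδ hs.2], w_le_one s hδ⟩

private lemma w_int' {t δ : ℝ} (hδ : 0 < δ) {f : ℝ → ℝ}
    (hf : IntegrableOn f (Icc 0 t)) :
    IntegrableOn
      (fun s => ((min t (((⌊s / δ⌋ : ℤ) + 1 : ℝ) * δ) - s) / δ - 1 / 2) * f s) (Icc 0 t) := by
  have h : (fun s => ((min t (((⌊s / δ⌋ : ℤ) + 1 : ℝ) * δ) - s) / δ - 1 / 2) * f s)
      = fun s => ((min t (((⌊s / δ⌋ : ℤ) + 1 : ℝ) * δ) - s) / δ) * f s - (1 / 2) * f s := by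
    ext s; ring
  rw [h]
  exact (w_int hδ hf).sub (hf.const_mul _)

private lemma floor_eq {δ : ℝ} (hδ : 0 < δ) {k : ℕ} {s : ℝ}
    (h1 : (k : ℝ) * δ < s) (h2 : s < ((k : ℝ) + 1) * δ) : ⌊s / δ⌋ = (k : ℤ) := by
  rw [Int.floor_eq_iff]
  constructor
  · push_cast
    rw [le_div_iff₀ hδ]
    linarith
  · push_cast
    rw [div_lt_iff₀ hδ]
    linarith

private lemma w_mean {t δ : ℝ} (hδ : 0 < δ) (k : ℕ) (hk : ((k : ℝ) + 1) * δ ≤ t) :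
    ∫ s in ((k : ℝ) * δ)..(((k : ℝ) + 1) * δ),
      ((min t (((⌊s / δ⌋ : ℤ) + 1 : ℝ) * δ) - s) / δ - 1 / 2) = 0 := by
  have hk0 : (0 : ℝ) ≤ (k : ℝ) := Nat.cast_nonneg k
  have hle : (k : ℝ) * δ ≤ ((k : ℝ) + 1) * δ := by nlinarith
  have hcongr : ∀ᵐ s : ℝ, s ∈ Set.uIoc ((k : ℝ) * δ) (((k : ℝ) + 1) * δ) →
      ((min t (((⌊s / δ⌋ : ℤ) + 1 : ℝ) * δ) - s) / δ - 1 / 2)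
      = ((((k : ℝ) + 1) * δ - s) / δ - 1 / 2) := by
    rw [ae_iff]
    apply measure_mono_null (t := {(((k : ℝ) + 1) * δ)}) _ Real.volume_singleton
    intro s hs
    simp only [mem_setOf_eq, _root_.not_imp] at hs
    obtain ⟨hsmem, hne⟩ := hs
    rw [uIoc_of_le hle] at hsmem
    simp only [mem_singleton_iff]
    by_contra hne'
    apply hne
    have hlt : s < ((k : ℝ) + 1) * δ := lt_of_le_of_ne hsmem.2 hne'
    rw [floor_eq hδ hsmem.1 hlt]
    push_cast
    rw [min_eq_right hk]
  rw [intervalIntegral.integral_congr_ae hcongr]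
  have h1 : IntervalIntegrable (fun s : ℝ => (((k : ℝ) + 1) * δ - s) / δ) volume
      ((k : ℝ) * δ) (((k : ℝ) + 1) * δ) :=
    (Continuous.div_const (by continuity) δ).intervalIntegrable _ _
  rw [intervalIntegral.integral_sub h1 intervalIntegrable_const]
  rw [intervalIntegral.integral_div]
  rw [intervalIntegral.integral_sub intervalIntegrable_const intervalIntegral.intervalIntegrable_id]
  simp only [intervalIntegral.integral_const, integral_id, smul_eq_mul]
  field_simp
  ring

private lemma w_int_one {t δ : ℝ} (hδ : 0 < δ) :
    IntegrableOn (fun s : ℝ => (min t (((⌊s / δ⌋ : ℤ) + 1 : ℝ) * δ) - s) / δ - 1 / 2)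
      (Icc 0 t) := by
  have h := w_int' (t := t) hδ (f := fun _ => (1 : ℝ))
    (integrableOn_const measure_Icc_lt_top.ne)
  simpa using h

private lemma cont_case {t : ℝ} (ht : 0 < t) (g : ℝ → ℝ) (hgc : Continuous g)
    (hgs : HasCompactSupport g) :
    Tendsto
      (fun δ : ℝ =>
        ∫ s in (0 : ℝ)..t, ((min t (((⌊s / δ⌋ : ℤ) + 1 : ℝ) * δ) - s) / δ) * g s)
      (nhdsWithin 0 (Ioi 0))
      (nhds ((1 / 2) * ∫ s in (0 : ℝ)..t, g s)) := by
  obtain ⟨C, hC⟩ := hgs.exists_bound_of_continuous hgc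
  have hC0 : 0 ≤ C := le_trans (norm_nonneg (g 0)) (hC 0)
  have hgi : IntegrableOn g (Icc 0 t) := hgc.integrableOn_Icc
  rw [Metric.tendsto_nhds]
  intro ε hε
  set ε₁ := ε / (4 * t) with hε₁def
  have hε₁ : 0 < ε₁ := by positivity
  obtain ⟨d, hd0, hd⟩ := Metric.uniformContinuous_iff.1
    (hgs.uniformContinuous_of_continuous hgc) ε₁ hε₁
  have hr0 : 0 < min d (ε / (2 * C + 2)) := lt_min hd0 (by positivity)
  filter_upwards [Ioo_mem_nhdsGT hr0] with δ hδmem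
  obtain ⟨hδ0, hδlt⟩ := hδmem
  have hδd : δ < d := lt_of_lt_of_le hδlt (min_le_left _ _)
  have hδC : δ < ε / (2 * C + 2) := lt_of_lt_of_le hδlt (min_le_right _ _)
  set n : ℕ := ⌊t / δ⌋.toNat with hn
  have htδ : 0 ≤ t / δ := by positivity
  have hnz : ((n : ℕ) : ℤ) = ⌊t / δ⌋ := Int.toNat_of_nonneg (Int.floor_nonneg.2 htδ)
  have hnr : (n : ℝ) = ((⌊t / δ⌋ : ℤ) : ℝ) := by exact_mod_cast congrArg (Int.cast : ℤ → ℝ) hnz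
  have hnt : (n : ℝ) * δ ≤ t := by
    rw [hnr, ← le_div_iff₀ hδ0]; exact Int.floor_le _
  have hnt2 : t < ((n : ℝ) + 1) * δ := by
    rw [hnr]; rw [← div_lt_iff₀ hδ0]; exact Int.lt_floor_add_one _
  set a : ℕ → ℝ := fun k => min ((k : ℝ) * δ) t with hadef
  have ha : ∀ k : ℕ, k ≤ n → a k = (k : ℝ) * δ := by
    intro k hk
    have hkr : (k : ℝ) ≤ (n : ℝ) := Nat.cast_le.2 hk
    exact min_eq_left (by nlinarith)
  have ha0 : a 0 = 0 := by simp [hadef, ht.le]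
  have haT : a (n + 1) = t := by
    apply min_eq_right
    push_cast
    linarith
  have hamem : ∀ k : ℕ, a k ∈ Icc 0 t :=
    fun k => ⟨le_min (by positivity) ht.le, min_le_right _ _⟩
  set f : ℝ → ℝ :=
    fun s => ((min t (((⌊s / δ⌋ : ℤ) + 1 : ℝ) * δ) - s) / δ - 1 / 2) * g s with hfdef
  have hfint : ∀ u v : ℝ, u ∈ Icc 0 t → v ∈ Icc 0 t → IntervalIntegrable f volume u v :=
    fun u v hu hv => ((w_int' hδ0 hgi).mono_set (uIcc_subset_Icc hu hv)).intervalIntegrable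
  have h0t : (0 : ℝ) ∈ Icc (0 : ℝ) t := ⟨le_refl _, ht.le⟩
  have htt : t ∈ Icc (0 : ℝ) t := ⟨ht.le, le_refl _⟩
  have h1 : IntervalIntegrable
      (fun s => ((min t (((⌊s / δ⌋ : ℤ) + 1 : ℝ) * δ) - s) / δ) * g s) volume 0 t :=
    ((w_int hδ0 hgi).mono_set (uIcc_subset_Icc h0t htt)).intervalIntegrable
  have h2 : IntervalIntegrable g volume 0 t := hgc.intervalIntegrable 0 t
  have key : (∫ s in (0:ℝ)..t, ((min t (((⌊s / δ⌋ : ℤ) + 1 : ℝ) * δ) - s) / δ) * g s)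
      - (1 / 2) * ∫ s in (0:ℝ)..t, g s = ∫ s in (0:ℝ)..t, f s := by
    rw [← intervalIntegral.integral_const_mul,
      ← intervalIntegral.integral_sub h1 (h2.const_mul _)]
    apply intervalIntegral.integral_congr
    intro s _
    simp only [hfdef]
    ring
  have hsum : ∑ k ∈ Finset.range (n + 1), ∫ s in a k..a (k + 1), f s
      = ∫ s in (a 0)..(a (n + 1)), f s :=
    intervalIntegral.sum_integral_adjacent_intervals
      (fun k _ => hfint _ _ (hamem k) (hamem (k + 1)))
  rw [ha0, haT] at hsum
  rw [Real.dist_eq, key, ← hsum]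
  -- per-cell bounds
  have hcell : ∀ k : ℕ, k < n → |∫ s in a k..a (k + 1), f s| ≤ ε₁ / 2 * δ := by
    intro k hkn
    have hk1 : (k : ℝ) + 1 ≤ (n : ℝ) := by exact_mod_cast Nat.cast_le.2 hkn
    have hkt : ((k : ℝ) + 1) * δ ≤ t := by nlinarith
    have hk0 : (0 : ℝ) ≤ (k : ℝ) := Nat.cast_nonneg k
    have hakk : a (k + 1) = ((k : ℝ) + 1) * δ := by
      rw [ha (k + 1) hkn]; push_cast; ring
    rw [ha k hkn.le, hakk]
    have hcellmem : ∀ u v : ℝ, u ∈ Icc 0 t → v ∈ Icc 0 t → True := fun _ _ _ _ => trivial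
    have hkδmem : (k : ℝ) * δ ∈ Icc (0:ℝ) t := ⟨by positivity, by nlinarith⟩
    have hk1δmem : ((k : ℝ) + 1) * δ ∈ Icc (0:ℝ) t := ⟨by positivity, hkt⟩
    have hwint : IntervalIntegrable
        (fun s : ℝ => (min t (((⌊s / δ⌋ : ℤ) + 1 : ℝ) * δ) - s) / δ - 1 / 2) volume
        ((k : ℝ) * δ) (((k : ℝ) + 1) * δ) :=
      ((w_int_one hδ0).mono_set (uIcc_subset_Icc hkδmem hk1δmem)).intervalIntegrable
    have hfcell : IntervalIntegrable f volume ((k : ℝ) * δ) (((k : ℝ) + 1) * δ) :=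
      hfint _ _ hkδmem hk1δmem
    have e1 : ∫ s in ((k:ℝ)*δ)..(((k:ℝ)+1)*δ),
        (((min t (((⌊s / δ⌋ : ℤ) + 1 : ℝ) * δ) - s) / δ - 1 / 2) * (g s - g ((k:ℝ)*δ)))
        = (∫ s in ((k:ℝ)*δ)..(((k:ℝ)+1)*δ), f s)
          - g ((k:ℝ)*δ) * ∫ s in ((k:ℝ)*δ)..(((k:ℝ)+1)*δ),
              ((min t (((⌊s / δ⌋ : ℤ) + 1 : ℝ) * δ) - s) / δ - 1 / 2) := by
      rw [← intervalIntegral.integral_const_mul,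
        ← intervalIntegral.integral_sub hfcell (hwint.const_mul _)]
      apply intervalIntegral.integral_congr
      intro s _
      simp only [hfdef]
      ring
    rw [w_mean hδ0 k hkt, mul_zero, sub_zero] at e1
    rw [← e1]
    have hb := intervalIntegral.norm_integral_le_of_norm_le_const (a := (k:ℝ)*δ)
      (b := ((k:ℝ)+1)*δ) (C := ε₁ / 2)
      (f := fun s => ((min t (((⌊s / δ⌋ : ℤ) + 1 : ℝ) * δ) - s) / δ - 1 / 2)
        * (g s - g ((k:ℝ)*δ))) ?_
    · rw [Real.norm_eq_abs] at hb
      have : |((k:ℝ)+1)*δ - (k:ℝ)*δ| = δ := by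
        rw [abs_of_nonneg (by nlinarith)]; ring
      rw [this] at hb
      exact hb
    · intro x hx
      rw [uIoc_of_le (by nlinarith)] at hx
      have hx0 : 0 ≤ x := le_trans (by positivity) hx.1.le
      have hxt : x ≤ t := le_trans hx.2 hkt
      have hw1 : |(min t (((⌊x / δ⌋ : ℤ) + 1 : ℝ) * δ) - x) / δ - 1 / 2| ≤ 1 / 2 := by
        rw [abs_le]
        constructor
        · linarith [w_nonneg (t := t) (s := x) hδ0 hxt]
        · linarith [w_le_one (t := t) x hδ0]
      have hg1 : |g x - g ((k:ℝ)*δ)| ≤ ε₁ := by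
        have hdist : dist x ((k:ℝ)*δ) < d := by
          rw [Real.dist_eq, abs_of_nonneg (by linarith [hx.1.le])]
          nlinarith [hx.2]
        have := hd hdist
        rw [Real.dist_eq] at this
        exact this.le
      rw [Real.norm_eq_abs, abs_mul]
      calc |(min t (((⌊x / δ⌋ : ℤ) + 1 : ℝ) * δ) - x) / δ - 1 / 2| * |g x - g ((k:ℝ)*δ)|
          ≤ (1/2) * ε₁ := by
            apply mul_le_mul hw1 hg1 (abs_nonneg _) (by norm_num)
        _ = ε₁ / 2 := by ring
  have hlast : |∫ s in a n..a (n + 1), f s| ≤ C / 2 * δ := by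
    rw [ha n (le_refl n), haT]
    have hb := intervalIntegral.norm_integral_le_of_norm_le_const (a := (n:ℝ)*δ)
      (b := t) (C := C / 2) (f := f) ?_
    · rw [Real.norm_eq_abs] at hb
      refine le_trans hb ?_
      have : |t - (n:ℝ)*δ| ≤ δ := by
        rw [abs_of_nonneg (by linarith)]
        linarith
      apply mul_le_mul_of_nonneg_left this (by positivity)
    · intro x hx
      rw [uIoc_of_le hnt] at hx
      have hx0 : 0 ≤ x := le_trans (by positivity) hx.1.le
      have hxt : x ≤ t := hx.2
      have hw1 : |(min t (((⌊x / δ⌋ : ℤ) + 1 : ℝ) * δ) - x) / δ - 1 / 2| ≤ 1 / 2 := by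
        rw [abs_le]
        constructor
        · linarith [w_nonneg (t := t) (s := x) hδ0 hxt]
        · linarith [w_le_one (t := t) x hδ0]
      rw [hfdef]
      simp only
      rw [Real.norm_eq_abs, abs_mul]
      calc |(min t (((⌊x / δ⌋ : ℤ) + 1 : ℝ) * δ) - x) / δ - 1 / 2| * |g x|
          ≤ (1/2) * C :=
            mul_le_mul hw1 (by simpa [Real.norm_eq_abs] using hC x) (abs_nonneg _) (by norm_num)
        _ = C / 2 := by ring
  calc |∑ k ∈ Finset.range (n + 1), ∫ s in a k..a (k + 1), f s|
      ≤ ∑ k ∈ Finset.range (n + 1), |∫ s in a k..a (k + 1), f s| :=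
        Finset.abs_sum_le_sum_abs _ _
    _ = (∑ k ∈ Finset.range n, |∫ s in a k..a (k + 1), f s|)
        + |∫ s in a n..a (n + 1), f s| := Finset.sum_range_succ _ n
    _ ≤ (n : ℝ) * (ε₁ / 2 * δ) + C / 2 * δ := by
        apply add_le_add _ hlast
        have := Finset.sum_le_card_nsmul (Finset.range n)
          (fun k => |∫ s in a k..a (k + 1), f s|) (ε₁ / 2 * δ)
          (fun k hk => hcell k (Finset.mem_range.1 hk))
        simpa [Finset.card_range, nsmul_eq_mul] using this
    _ < ε := by
        have h1 : (n : ℝ) * δ * ε₁ ≤ t * ε₁ := mul_le_mul_of_nonneg_right hnt hε₁.le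
        have h2 : t * ε₁ = ε / 4 := by
          rw [hε₁def]; field_simp
        have h3 : C * δ ≤ C * (ε / (2 * C + 2)) := mul_le_mul_of_nonneg_left hδC.le hC0
        have h4 : C * (ε / (2 * C + 2)) ≤ ε / 2 := by
          rw [mul_div_assoc', div_le_div_iff₀ (by positivity) (by norm_num)]
          nlinarith
        nlinarith

/-- **Lemma 4.1, first assertion**: with `τ_δ(s) = min(t, (⌊s/δ⌋ + 1)δ) - s`, for every
measurable square-integrable `H` on `[0, t]` we have
`∫_0^t (τ_δ(s)/δ) H_s ds → (1/2) ∫_0^t H_s ds` as `δ → 0⁺`. -/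
theorem tendsto_integral_tau_div_delta
    (t : ℝ) (ht : 0 < t) (H : ℝ → ℝ) (hHmeas : Measurable H)
    (hH2 : IntegrableOn (fun s => H s ^ 2) (Icc 0 t)) :
    Tendsto
      (fun δ : ℝ =>
        ∫ s in (0 : ℝ)..t, ((min t (((⌊s / δ⌋ : ℤ) + 1 : ℝ) * δ) - s) / δ) * H s)
      (nhdsWithin 0 (Ioi 0))
      (nhds ((1 / 2) * ∫ s in (0 : ℝ)..t, H s)) := by
  have hH1 : IntegrableOn H (Icc 0 t) := by
    have hmono : ∀ᵐ s ∂(volume.restrict (Icc (0:ℝ) t)), ‖H s‖ ≤ H s ^ 2 + 1 := by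
      filter_upwards with s
      rw [Real.norm_eq_abs]
      nlinarith [sq_nonneg (|H s| - 1), sq_abs (H s), abs_nonneg (H s)]
    exact Integrable.mono' (hH2.add (integrableOn_const measure_Icc_lt_top.ne))
      hHmeas.aestronglyMeasurable hmono
  rw [Metric.tendsto_nhds]
  intro ε hε
  have hind : Integrable ((Ioc (0:ℝ) t).indicator H) volume :=
    (integrable_indicator_iff measurableSet_Ioc).2 (hH1.mono_set Ioc_subset_Icc_self)
  obtain ⟨g, hgsupp, hgL1, hgc, hgint⟩ :=
    hind.exists_hasCompactSupport_integral_sub_le (show (0:ℝ) < ε / 8 by linarith)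
  have hgi : IntegrableOn g (Icc (0:ℝ) t) := hgc.integrableOn_Icc
  have key : ∫ x in Ioc (0:ℝ) t, ‖H x - g x‖ ≤ ε / 8 := by
    have e1 : ∫ x in Ioc (0:ℝ) t, ‖H x - g x‖
        = ∫ x in Ioc (0:ℝ) t, ‖(Ioc (0:ℝ) t).indicator H x - g x‖ :=
      setIntegral_congr_fun measurableSet_Ioc (fun x hx => by rw [indicator_of_mem hx])
    rw [e1]
    exact le_trans (setIntegral_le_integral (hind.sub hgint).norm
      (Eventually.of_forall fun x => norm_nonneg _)) hgL1
  have hcont := Metric.tendsto_nhds.1 (cont_case ht g hgc hgsupp) (ε / 2) (by linarith)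
  filter_upwards [hcont, self_mem_nhdsWithin] with δ hδ2 hδmem
  have hδ0 : 0 < δ := hδmem
  have h0t : (0 : ℝ) ∈ Icc (0 : ℝ) t := ⟨le_refl _, ht.le⟩
  have htt : t ∈ Icc (0 : ℝ) t := ⟨ht.le, le_refl _⟩
  have hwH : IntervalIntegrable
      (fun s => ((min t (((⌊s / δ⌋ : ℤ) + 1 : ℝ) * δ) - s) / δ) * H s) volume 0 t :=
    ((w_int hδ0 hH1).mono_set (uIcc_subset_Icc h0t htt)).intervalIntegrable
  have hwg : IntervalIntegrable
      (fun s => ((min t (((⌊s / δ⌋ : ℤ) + 1 : ℝ) * δ) - s) / δ) * g s) volume 0 t :=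
    ((w_int hδ0 hgi).mono_set (uIcc_subset_Icc h0t htt)).intervalIntegrable
  have hHi : IntervalIntegrable H volume 0 t :=
    (hH1.mono_set (uIcc_subset_Icc h0t htt)).intervalIntegrable
  have hgI : IntervalIntegrable g volume 0 t := hgc.intervalIntegrable 0 t
  refine lt_of_le_of_lt (dist_triangle4 _
    (∫ s in (0:ℝ)..t, ((min t (((⌊s / δ⌋ : ℤ) + 1 : ℝ) * δ) - s) / δ) * g s)
    ((1 / 2) * ∫ s in (0:ℝ)..t, g s) _) ?_
  have hsubint : IntegrableOn (fun s => H s - g s) (Icc (0:ℝ) t) := hH1.sub hgi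
  have t1 : dist (∫ s in (0:ℝ)..t, ((min t (((⌊s / δ⌋ : ℤ) + 1 : ℝ) * δ) - s) / δ) * H s)
      (∫ s in (0:ℝ)..t, ((min t (((⌊s / δ⌋ : ℤ) + 1 : ℝ) * δ) - s) / δ) * g s) ≤ ε / 8 := by
    rw [Real.dist_eq, ← intervalIntegral.integral_sub hwH hwg]
    have e : ∫ s in (0:ℝ)..t,
        (((min t (((⌊s / δ⌋ : ℤ) + 1 : ℝ) * δ) - s) / δ) * H s
          - ((min t (((⌊s / δ⌋ : ℤ) + 1 : ℝ) * δ) - s) / δ) * g s)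
        = ∫ s in (0:ℝ)..t,
          ((min t (((⌊s / δ⌋ : ℤ) + 1 : ℝ) * δ) - s) / δ) * (H s - g s) := by
      apply intervalIntegral.integral_congr
      intro s _
      ring
    rw [e, intervalIntegral.integral_of_le ht.le, ← Real.norm_eq_abs]
    refine le_trans (le_trans (norm_integral_le_integral_norm _) ?_) key
    apply setIntegral_mono_on
    · exact ((w_int hδ0 hsubint).mono_set Ioc_subset_Icc_self).norm
    · exact (hsubint.mono_set Ioc_subset_Icc_self).norm
    · exact measurableSet_Ioc
    · intro x hx
      rw [Real.norm_eq_abs, Real.norm_eq_abs, abs_mul]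
      have hw0 := w_nonneg (t := t) (s := x) hδ0 hx.2
      have hw1 := w_le_one (t := t) x hδ0
      calc |(min t (((⌊x / δ⌋ : ℤ) + 1 : ℝ) * δ) - x) / δ| * |H x - g x|
          ≤ 1 * |H x - g x| :=
            mul_le_mul_of_nonneg_right (by rw [abs_of_nonneg hw0]; exact hw1) (abs_nonneg _)
        _ = |H x - g x| := one_mul _
  have t3 : dist ((1 / 2) * ∫ s in (0:ℝ)..t, g s) ((1 / 2) * ∫ s in (0:ℝ)..t, H s)
      ≤ ε / 16 := by
    rw [Real.dist_eq, ← mul_sub, abs_mul, ← intervalIntegral.integral_sub hgI hHi]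
    have habs : |(1:ℝ) / 2| = 1 / 2 := by norm_num
    rw [habs]
    have hb : |∫ s in (0:ℝ)..t, (g s - H s)| ≤ ε / 8 := by
      rw [intervalIntegral.integral_of_le ht.le, ← Real.norm_eq_abs]
      refine le_trans (le_trans (norm_integral_le_integral_norm _) ?_) key
      apply le_of_eq
      apply setIntegral_congr_fun measurableSet_Ioc
      intro x _
      simp only [Real.norm_eq_abs]
      exact abs_sub_comm _ _
    linarith
  simp only [Real.dist_eq] at hδ2 t1 t3 ⊢
  linarith [abs_nonneg ((∫ s in (0:ℝ)..t, ((min t (((⌊s / δ⌋ : ℤ) + 1 : ℝ) * δ) - s) / δ) * g s)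
    - (1 / 2) * ∫ s in (0:ℝ)..t, g s)]
end

section
/- Fix t > 0. For δ > 0 define τ_δ(s) = min(t, (⌊s/δ⌋ + 1)δ) − s for s ∈ [0, t]. If H : [0, t] → ℝ is measurable with ∫_0^t H_s² ds < ∞, then ∫_0^t (2 τ_δ(s)/δ − 1)² H_s ds → (1/3) ∫_0^t H_s ds as δ → 0⁺. -/
open MeasureTheory Filter Set

noncomputable def phi (x : ℝ) : ℝ := (1 - 2 * Int.fract x) ^ 2 - 1/3

lemma phi_cont : Continuous phi := by
  have : Continuous ((fun y : ℝ => (1 - 2*y)^2 - 1/3) ∘ Int.fract) := by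
    apply ContinuousOn.comp_fract'' (by fun_prop) (by norm_num)
  exact this

lemma phi_periodic : Function.Periodic phi 1 := by
  intro x; simp [phi, Int.fract_add_one]

lemma phi_bound (x : ℝ) : |phi x| ≤ 1 := by
  have h1 : 0 ≤ Int.fract x := Int.fract_nonneg x
  have h2 : Int.fract x < 1 := Int.fract_lt_one x
  rw [abs_le]; simp only [phi]; constructor <;> nlinarith [sq_nonneg (1 - 2 * Int.fract x), sq_nonneg (Int.fract x)]

lemma phi_integral_eq : ∫ u in (0:ℝ)..1, phi u = 0 := by
  have : ∀ u ∈ Set.uIcc (0:ℝ) 1, phi u = (1 - 2*u)^2 - 1/3 := by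
    intro u hu
    rw [Set.uIcc_of_le (by norm_num)] at hu
    rcases eq_or_lt_of_le hu.2 with h | h
    · subst h; simp [phi]; norm_num
    · rw [phi, Int.fract_eq_self.2 ⟨hu.1, h⟩]
  rw [intervalIntegral.integral_congr this]
  have : ∀ u : ℝ, (1 - 2*u)^2 - 1/3 = 4*u^2 - 4*u + (2:ℝ)/3 := by intro u; ring
  simp_rw [this]
  rw [intervalIntegral.integral_add (by apply IntervalIntegrable.sub <;> apply Continuous.intervalIntegrable <;> fun_prop) (by apply Continuous.intervalIntegrable; fun_prop),
    intervalIntegral.integral_sub (by apply Continuous.intervalIntegrable; fun_prop) (by apply Continuous.intervalIntegrable; fun_prop),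
    intervalIntegral.integral_const_mul, intervalIntegral.integral_const_mul,
    integral_pow, integral_id, intervalIntegral.integral_const]
  norm_num

noncomputable def Phi (x : ℝ) : ℝ := ∫ u in (0:ℝ)..x, phi u

lemma Phi_hasDerivAt (x : ℝ) : HasDerivAt Phi (phi x) x :=
  intervalIntegral.integral_hasDerivAt_right (phi_cont.intervalIntegrable _ _)
    (phi_cont.stronglyMeasurableAtFilter _ _) phi_cont.continuousAt

lemma Phi_periodic : Function.Periodic Phi 1 := by
  intro x
  have h1 : Phi (x + 1) = Phi x + ∫ u in x..(x+1), phi u := by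
    rw [Phi, Phi, intervalIntegral.integral_add_adjacent_intervals
      (phi_cont.intervalIntegrable _ _) (phi_cont.intervalIntegrable _ _)]
  rw [h1, phi_periodic.intervalIntegral_add_eq x 0, zero_add, phi_integral_eq, add_zero]

lemma Phi_bound (x : ℝ) : |Phi x| ≤ 1 := by
  have hfr : Phi x = Phi (Int.fract x) := by
    have := Phi_periodic.sub_int_mul_eq (x := x) (⌊x⌋)
    rw [mul_one] at this
    rw [← this, Int.self_sub_floor]
  rw [hfr, Phi]
  have h2 : Int.fract x < 1 := Int.fract_lt_one x
  have h1 : 0 ≤ Int.fract x := Int.fract_nonneg x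
  calc ‖∫ u in (0:ℝ)..Int.fract x, phi u‖ ≤ 1 * |Int.fract x - 0| :=
        intervalIntegral.norm_integral_le_of_norm_le_const (fun u _ => phi_bound u)
    _ ≤ 1 := by rw [sub_zero, one_mul, abs_of_nonneg h1]; exact h2.le

lemma phi_div_cont (δ : ℝ) : Continuous (fun s : ℝ => phi (s / δ)) :=
  phi_cont.comp (continuous_id.div_const δ)

lemma hasDerivAt_Phi_div {δ : ℝ} (hδ : δ ≠ 0) (s : ℝ) :
    HasDerivAt (fun s : ℝ => δ * Phi (s / δ)) (phi (s / δ)) s := by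
  have h1 : HasDerivAt (fun s : ℝ => Phi (s / δ)) (phi (s / δ) * (1 / δ)) s := by
    have := (Phi_hasDerivAt (s / δ)).comp s ((hasDerivAt_id s).div_const δ)
    exact this
  have := h1.const_mul δ
  convert this using 1
  · rfl
  · rfl
  rw [one_div, mul_left_comm, mul_inv_cancel₀ hδ, mul_one]

lemma poly_ibp {δ : ℝ} (hδ : δ ≠ 0) (p : Polynomial ℝ) (a b : ℝ) :
    ∫ s in a..b, phi (s / δ) * p.eval s
      = p.eval b * (δ * Phi (b / δ)) - p.eval a * (δ * Phi (a / δ))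
        - ∫ s in a..b, p.derivative.eval s * (δ * Phi (s / δ)) := by
  have h := intervalIntegral.integral_mul_deriv_eq_deriv_mul
    (u := fun s => p.eval s) (u' := fun s => p.derivative.eval s)
    (v := fun s => δ * Phi (s / δ)) (v' := fun s => phi (s / δ))
    (fun x _ => p.hasDerivAt x) (fun x _ => hasDerivAt_Phi_div hδ x)
    (p.derivative.continuous_aeval.intervalIntegrable a b)
    ((phi_div_cont δ).intervalIntegrable a b)
  rw [← h]
  congr 1; ext s; ring

lemma tendsto_cont_case {g : ℝ → ℝ} (hgc : Continuous g) (hgs : HasCompactSupport g) :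
    Tendsto (fun δ : ℝ => ∫ s, phi (s / δ) * g s) (nhdsWithin 0 (Ioi 0)) (nhds 0) := by
  obtain ⟨R, hR⟩ := hgs.isCompact.isBounded.subset_closedBall 0
  set a : ℝ := -(|R| + 1) with ha
  set b : ℝ := |R| + 1 with hb
  have hab : a < b := by have := abs_nonneg R; rw [ha, hb]; linarith
  have hzero : ∀ x, x ∉ Ioc a b → g x = 0 := by
    intro x hx
    apply image_eq_zero_of_notMem_tsupport
    intro hmem
    apply hx
    have := hR hmem
    rw [Metric.mem_closedBall, Real.dist_eq, sub_zero] at this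
    have h1 := abs_le.1 this
    have h2 : |R| + 1 ≤ |R| + 1 := le_refl _
    constructor
    · nlinarith [le_abs_self R, neg_abs_le R, abs_nonneg R]
    · nlinarith [le_abs_self R, abs_nonneg R]
  have key : ∀ δ : ℝ, (∫ s, phi (s / δ) * g s) = ∫ s in a..b, phi (s / δ) * g s := by
    intro δ
    rw [intervalIntegral.integral_of_le hab.le,
      setIntegral_eq_integral_of_forall_compl_eq_zero (fun x hx => by rw [hzero x hx, mul_zero])]
  rw [NormedAddCommGroup.tendsto_nhds_zero]
  intro ε hε
  -- choose polynomial approximation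
  obtain ⟨p, hp⟩ := exists_polynomial_near_of_continuousOn a b g
    (hgc.continuousOn) (ε / (4 * (b - a))) (div_pos hε (mul_pos (by norm_num) (sub_pos.2 hab)))
  obtain ⟨M, hM⟩ := (isCompact_Icc (a := a) (b := b)).exists_bound_of_continuousOn
    (p.derivative.continuous.continuousOn)
  set C : ℝ := |Polynomial.eval b p| + |Polynomial.eval a p| + |M| * (b - a) with hC
  have hC0 : 0 ≤ C := by
    have : 0 ≤ |M| * (b - a) := mul_nonneg (abs_nonneg M) (by linarith)
    positivity
  have hsplit : ∀ δ : ℝ, (∫ s in a..b, phi (s / δ) * g s)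
      = (∫ s in a..b, phi (s / δ) * (g s - p.eval s)) + ∫ s in a..b, phi (s / δ) * p.eval s := by
    intro δ
    rw [← intervalIntegral.integral_add (f := fun s => phi (s / δ) * (g s - p.eval s))
      (g := fun s => phi (s / δ) * p.eval s)
      (((phi_div_cont δ).mul (hgc.sub p.continuous)).intervalIntegrable a b)
      (((phi_div_cont δ).mul p.continuous).intervalIntegrable a b)]
    congr 1; ext s; ring
  have bound1 : ∀ δ : ℝ, ‖∫ s in a..b, phi (s / δ) * (g s - p.eval s)‖ ≤ ε / 4 := by
    intro δ
    have h := intervalIntegral.norm_integral_le_of_norm_le_const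
      (C := ε / (4 * (b - a))) (f := fun s => phi (s / δ) * (g s - p.eval s)) (a := a) (b := b) ?_
    · rw [abs_of_nonneg (by linarith : (0:ℝ) ≤ b - a)] at h
      have hba : (b - a) ≠ 0 := sub_ne_zero.2 hab.ne'
      calc ‖∫ s in a..b, phi (s / δ) * (g s - p.eval s)‖ ≤ ε / (4 * (b - a)) * (b - a) := h
        _ = ε / 4 := by field_simp
    · intro x hx
      rw [uIoc_of_le hab.le] at hx
      have hx' : x ∈ Icc a b := ⟨hx.1.le, hx.2⟩
      have h1 : |phi (x / δ)| ≤ 1 := phi_bound _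
      have h2 : |g x - p.eval x| ≤ ε / (4 * (b - a)) := by
        rw [abs_sub_comm]; exact (hp x hx').le
      calc ‖phi (x / δ) * (g x - p.eval x)‖ = |phi (x / δ)| * |g x - p.eval x| := abs_mul _ _
        _ ≤ 1 * (ε / (4 * (b - a))) := mul_le_mul h1 h2 (abs_nonneg _) zero_le_one
        _ = ε / (4 * (b - a)) := one_mul _
  have bound2 : ∀ δ : ℝ, 0 < δ → ‖∫ s in a..b, phi (s / δ) * p.eval s‖ ≤ δ * C := by
    intro δ hδ
    rw [poly_ibp hδ.ne' p a b]
    have e1 : ‖Polynomial.eval b p * (δ * Phi (b / δ))‖ ≤ |Polynomial.eval b p| * δ := by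
      have h2 : ‖Polynomial.eval b p * (δ * Phi (b / δ))‖
          = |Polynomial.eval b p| * (|δ| * |Phi (b / δ)|) := by
        simp [Real.norm_eq_abs, abs_mul]
      rw [h2, abs_of_pos hδ]
      calc |Polynomial.eval b p| * (δ * |Phi (b / δ)|) ≤ |Polynomial.eval b p| * (δ * 1) := by
            gcongr; exact Phi_bound _
        _ = |Polynomial.eval b p| * δ := by ring
    have e2 : ‖Polynomial.eval a p * (δ * Phi (a / δ))‖ ≤ |Polynomial.eval a p| * δ := by
      have h2 : ‖Polynomial.eval a p * (δ * Phi (a / δ))‖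
          = |Polynomial.eval a p| * (|δ| * |Phi (a / δ)|) := by
        simp [Real.norm_eq_abs, abs_mul]
      rw [h2, abs_of_pos hδ]
      calc |Polynomial.eval a p| * (δ * |Phi (a / δ)|) ≤ |Polynomial.eval a p| * (δ * 1) := by
            gcongr; exact Phi_bound _
        _ = |Polynomial.eval a p| * δ := by ring
    have e3 : ‖∫ s in a..b, p.derivative.eval s * (δ * Phi (s / δ))‖ ≤ |M| * δ * (b - a) := by
      have h := intervalIntegral.norm_integral_le_of_norm_le_const
        (C := |M| * δ) (f := fun s => p.derivative.eval s * (δ * Phi (s / δ))) (a := a) (b := b) ?_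
      · rwa [abs_of_nonneg (by linarith : (0:ℝ) ≤ b - a)] at h
      · intro x hx
        rw [uIoc_of_le hab.le] at hx
        have hx' : x ∈ Icc a b := ⟨hx.1.le, hx.2⟩
        have h1 : ‖p.derivative.eval x‖ ≤ |M| := (hM x hx').trans (le_abs_self M)
        have h2 : ‖p.derivative.eval x * (δ * Phi (x / δ))‖
            = |p.derivative.eval x| * (|δ| * |Phi (x / δ)|) := by
          simp [Real.norm_eq_abs, abs_mul]
        rw [h2, abs_of_pos hδ]
        have h1' : |Polynomial.eval x (Polynomial.derivative p)| ≤ |M| := h1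
        calc |Polynomial.eval x (Polynomial.derivative p)| * (δ * |Phi (x / δ)|)
            ≤ |M| * (δ * 1) := by
              apply mul_le_mul h1' _ (by positivity) (abs_nonneg M)
              gcongr; exact Phi_bound _
          _ = |M| * δ := by ring
    calc ‖Polynomial.eval b p * (δ * Phi (b / δ)) - Polynomial.eval a p * (δ * Phi (a / δ))
          - ∫ s in a..b, p.derivative.eval s * (δ * Phi (s / δ))‖
        ≤ ‖Polynomial.eval b p * (δ * Phi (b / δ)) - Polynomial.eval a p * (δ * Phi (a / δ))‖
          + ‖∫ s in a..b, p.derivative.eval s * (δ * Phi (s / δ))‖ := norm_sub_le _ _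
      _ ≤ (‖Polynomial.eval b p * (δ * Phi (b / δ))‖ + ‖Polynomial.eval a p * (δ * Phi (a / δ))‖)
          + ‖∫ s in a..b, p.derivative.eval s * (δ * Phi (s / δ))‖ := by
            gcongr; exact norm_sub_le _ _
      _ ≤ (|Polynomial.eval b p| * δ + |Polynomial.eval a p| * δ) + |M| * δ * (b - a) := by
            gcongr
      _ = δ * C := by rw [hC]; ring
  have hev : Ioo (0:ℝ) (ε / (2 * (C + 1))) ∈ nhdsWithin (0:ℝ) (Ioi 0) := by
    apply Ioo_mem_nhdsGT
    exact div_pos hε (by linarith)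
  filter_upwards [hev] with δ hδ
  rw [key δ, hsplit δ]
  have b1 := bound1 δ
  have b2 := bound2 δ hδ.1
  have hδC : δ * C < ε / 2 := by
    have h1 : δ < ε / (2 * (C + 1)) := hδ.2
    have h2 : δ * C ≤ δ * (C + 1) := by nlinarith [hδ.1]
    have h3 : δ * (C + 1) < ε / (2 * (C + 1)) * (C + 1) := by
      apply mul_lt_mul_of_pos_right h1; linarith
    have h4 : ε / (2 * (C + 1)) * (C + 1) = ε / 2 := by field_simp
    linarith
  calc ‖(∫ s in a..b, phi (s / δ) * (g s - p.eval s)) + ∫ s in a..b, phi (s / δ) * p.eval s‖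
      ≤ ‖∫ s in a..b, phi (s / δ) * (g s - p.eval s)‖
        + ‖∫ s in a..b, phi (s / δ) * p.eval s‖ := norm_add_le _ _
    _ ≤ ε / 4 + δ * C := by gcongr
    _ < ε := by linarith [hε]

lemma tendsto_integrable_case {f : ℝ → ℝ} (hf : Integrable f) :
    Tendsto (fun δ : ℝ => ∫ s, phi (s / δ) * f s) (nhdsWithin 0 (Ioi 0)) (nhds 0) := by
  rw [NormedAddCommGroup.tendsto_nhds_zero]
  intro ε hε
  obtain ⟨g, hgs, hgL1, hgc, hgi⟩ := hf.exists_hasCompactSupport_integral_sub_le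
    (show (0:ℝ) < ε / 4 by linarith)
  have hint : ∀ (δ : ℝ) (h : ℝ → ℝ), Integrable h → Integrable (fun s => phi (s / δ) * h s) := by
    intro δ h hh
    exact hh.bdd_mul (c := 1) ((phi_div_cont δ).aestronglyMeasurable) (Eventually.of_forall fun x => phi_bound _)
  have hdiff : ∀ δ : ℝ, ‖(∫ s, phi (s / δ) * f s) - ∫ s, phi (s / δ) * g s‖ ≤ ε / 4 := by
    intro δ
    rw [← integral_sub (hint δ f hf) (hint δ g hgi)]
    have h1 : ‖∫ s, (phi (s / δ) * f s - phi (s / δ) * g s)‖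
        ≤ ∫ s, ‖phi (s / δ) * f s - phi (s / δ) * g s‖ := norm_integral_le_integral_norm _
    refine h1.trans (le_trans ?_ hgL1)
    apply integral_mono_of_nonneg (Eventually.of_forall fun s => norm_nonneg _)
      (hf.sub hgi).norm
    apply Eventually.of_forall
    intro s
    show ‖phi (s / δ) * f s - phi (s / δ) * g s‖ ≤ ‖f s - g s‖
    have h2 : phi (s / δ) * f s - phi (s / δ) * g s = phi (s / δ) * (f s - g s) := by ring
    rw [h2]
    calc ‖phi (s / δ) * (f s - g s)‖ = |phi (s / δ)| * ‖f s - g s‖ := by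
          simp [Real.norm_eq_abs, abs_mul]
      _ ≤ 1 * ‖f s - g s‖ := by gcongr; exact phi_bound _
      _ = ‖f s - g s‖ := one_mul _
  have hg0 := tendsto_cont_case hgc hgs
  rw [NormedAddCommGroup.tendsto_nhds_zero] at hg0
  filter_upwards [hg0 (ε / 2) (by linarith)] with δ hδ
  calc ‖∫ s, phi (s / δ) * f s‖
      ≤ ‖(∫ s, phi (s / δ) * f s) - ∫ s, phi (s / δ) * g s‖ + ‖∫ s, phi (s / δ) * g s‖ := by
        have := norm_add_le ((∫ s, phi (s / δ) * f s) - ∫ s, phi (s / δ) * g s)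
          (∫ s, phi (s / δ) * g s)
        simpa using this
    _ ≤ ε / 4 + ε / 2 := add_le_add (hdiff δ) hδ.le
    _ < ε := by linarith

/-- **Lemma 4.1, second assertion**: with `τ_δ(s) = min(t, (⌊s/δ⌋ + 1)δ) - s`, for every
measurable square-integrable `H` on `[0, t]` we have
`∫_0^t (2 τ_δ(s)/δ - 1)² H_s ds → (1/3) ∫_0^t H_s ds` as `δ → 0⁺`. -/
theorem tendsto_integral_sq_two_tau_div_delta_sub_one
    (t : ℝ) (ht : 0 < t) (H : ℝ → ℝ) (hHmeas : Measurable H)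
    (hH2 : IntegrableOn (fun s => H s ^ 2) (Icc 0 t)) :
    Tendsto
      (fun δ : ℝ =>
        ∫ s in (0 : ℝ)..t,
          (2 * (min t (((⌊s / δ⌋ : ℤ) + 1 : ℝ) * δ) - s) / δ - 1) ^ 2 * H s)
      (nhdsWithin 0 (Ioi 0))
      (nhds ((1 / 3) * ∫ s in (0 : ℝ)..t, H s)) := by
  set w : ℝ → ℝ → ℝ :=
    fun δ s => (2 * (min t (((⌊s / δ⌋ : ℤ) + 1 : ℝ) * δ) - s) / δ - 1) ^ 2 with hw
  -- integrability of H on (0, t]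
  have hbound : Integrable (fun s => (H s ^ 2 + 1) / 2) (volume.restrict (Icc 0 t)) := by
    exact (hH2.add (integrableOn_const (by simp [Real.volume_Icc]))).div_const 2
  have hIntIcc : IntegrableOn H (Icc 0 t) := by
    apply Integrable.mono hbound (hHmeas.aestronglyMeasurable.restrict)
    apply Eventually.of_forall
    intro s
    rw [Real.norm_eq_abs, Real.norm_eq_abs]
    have h1 : |H s| ≤ (H s ^ 2 + 1) / 2 := by nlinarith [sq_nonneg (|H s| - 1), sq_abs (H s)]
    have h2 : (0:ℝ) ≤ (H s ^ 2 + 1) / 2 := by positivity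
    rw [abs_of_nonneg h2]; exact h1
  have hInt : IntegrableOn H (Ioc 0 t) := hIntIcc.mono_set Ioc_subset_Icc_self
  -- measurability of the weight
  have hwmeas : ∀ δ : ℝ, Measurable (w δ) := by
    intro δ
    have m1 : Measurable fun s : ℝ => ((⌊s / δ⌋ : ℤ) : ℝ) :=
      Measurable.comp (by measurability) (measurable_id.div_const δ).floor
    have m2 : Measurable fun s : ℝ => min t ((((⌊s / δ⌋ : ℤ) : ℝ) + 1) * δ) :=
      measurable_const.min ((m1.add_const 1).mul_const δ)
    have m3 : Measurable fun s : ℝ => min t ((((⌊s / δ⌋ : ℤ) : ℝ) + 1) * δ) - s :=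
      m2.sub measurable_id
    have m4 : Measurable fun s : ℝ => 2 * (min t ((((⌊s / δ⌋ : ℤ) : ℝ) + 1) * δ) - s) / δ - 1 :=
      ((m3.const_mul 2).div_const δ).sub_const 1
    exact m4.pow_const 2
  -- weight bounds on (0, t]
  have hwle : ∀ δ : ℝ, 0 < δ → ∀ s ∈ Ioc 0 t, w δ s ≤ 1 := by
    intro δ hδ s hs
    set c : ℝ := ((⌊s / δ⌋ : ℤ) : ℝ) with hc
    have hfl : c ≤ s / δ := Int.floor_le _
    have hfl2 : s / δ < c + 1 := Int.lt_floor_add_one _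
    have hcd : c * δ ≤ s := by
      have := mul_le_mul_of_nonneg_right hfl hδ.le
      rwa [div_mul_cancel₀ _ hδ.ne'] at this
    have hcd2 : s < (c + 1) * δ := by
      have := mul_lt_mul_of_pos_right hfl2 hδ
      rwa [div_mul_cancel₀ _ hδ.ne'] at this
    have h1 : min t ((c + 1) * δ) ≤ s + δ := by
      apply min_le_of_right_le; nlinarith
    have h2 : s ≤ min t ((c + 1) * δ) := le_min hs.2 hcd2.le
    have hu0 : 0 ≤ (min t ((c + 1) * δ) - s) / δ := div_nonneg (by linarith) hδ.le
    have hu1 : (min t ((c + 1) * δ) - s) / δ ≤ 1 := (div_le_one hδ).2 (by linarith)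
    rw [hw]
    simp only
    rw [mul_div_assoc]
    nlinarith [hu0, hu1]
  -- the periodic identity off the last interval
  have hpsi : ∀ δ : ℝ, δ ≠ 0 → ∀ s : ℝ,
      (2 * ((((⌊s / δ⌋ : ℤ) : ℝ) + 1) * δ - s) / δ - 1) ^ 2 = phi (s / δ) + 1/3 := by
    intro δ hδ s
    rw [phi]
    rw [Int.fract]
    field_simp
    ring
  have hmin : ∀ δ : ℝ, 0 < δ → ∀ s : ℝ, 0 < s → s ≤ t - δ →
      min t ((((⌊s / δ⌋ : ℤ) : ℝ) + 1) * δ) = (((⌊s / δ⌋ : ℤ) : ℝ) + 1) * δ := by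
    intro δ hδ s hs0 hs
    apply min_eq_right
    have hfl : ((⌊s / δ⌋ : ℤ) : ℝ) ≤ s / δ := Int.floor_le _
    have hcd : ((⌊s / δ⌋ : ℤ) : ℝ) * δ ≤ s := by
      have := mul_le_mul_of_nonneg_right hfl hδ.le
      rwa [div_mul_cancel₀ _ hδ.ne'] at this
    nlinarith
  -- bounds for the periodic weight
  have hpsib : ∀ x : ℝ, 0 ≤ phi x + 1/3 ∧ phi x + 1/3 ≤ 1 := by
    intro x
    have h1 : 0 ≤ Int.fract x := Int.fract_nonneg x
    have h2 : Int.fract x < 1 := Int.fract_lt_one x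
    rw [phi]
    constructor
    · nlinarith [sq_nonneg (1 - 2 * Int.fract x)]
    · nlinarith [sq_nonneg (1 - 2 * Int.fract x)]
  set f : ℝ → ℝ := (Ioc 0 t).indicator H with hf
  have hfint : Integrable f := IntegrableOn.integrable_indicator hInt measurableSet_Ioc
  have hA := tendsto_integrable_case hfint
  have hPsiInt : ∀ δ : ℝ, IntegrableOn (fun s => (phi (s / δ) + 1/3) * H s) (Ioc 0 t) := by
    intro δ
    apply hInt.bdd_mul (c := 1) ((phi_div_cont δ).add continuous_const).aestronglyMeasurable
    refine Eventually.of_forall fun x => ?_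
    simp only [Pi.add_apply]
    rw [Real.norm_eq_abs, abs_of_nonneg (hpsib (x / δ)).1]
    exact (hpsib (x / δ)).2
  have hPhiInt : ∀ δ : ℝ, IntegrableOn (fun s => phi (s / δ) * H s) (Ioc 0 t) := by
    intro δ
    exact hInt.bdd_mul (c := 1) (phi_div_cont δ).aestronglyMeasurable (Eventually.of_forall fun x => phi_bound _)
  have hWInt : ∀ δ : ℝ, 0 < δ → IntegrableOn (fun s => w δ s * H s) (Ioc 0 t) := by
    intro δ hδ
    apply Integrable.mono hInt (((hwmeas δ).mul hHmeas).aestronglyMeasurable.restrict)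
    rw [ae_restrict_iff' measurableSet_Ioc]
    apply Eventually.of_forall
    intro s hs
    rw [Real.norm_eq_abs, Real.norm_eq_abs, Pi.mul_apply, abs_mul]
    have h0 : 0 ≤ w δ s := by rw [hw]; positivity
    have h1 : |w δ s| ≤ 1 := by rw [abs_of_nonneg h0]; exact hwle δ hδ s hs
    nlinarith [abs_nonneg (H s)]
  -- decomposition of the integral for positive δ
  have hdecomp : ∀ δ : ℝ, 0 < δ →
      (∫ s in (0:ℝ)..t, w δ s * H s)
        = (∫ s, phi (s / δ) * f s)
          + (∫ s in Ioc 0 t, (w δ s * H s - (phi (s / δ) + 1/3) * H s))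
          + (1/3) * ∫ s in Ioc 0 t, H s := by
    intro δ hδ
    rw [intervalIntegral.integral_of_le ht.le]
    have e1 : ∫ s in Ioc 0 t, (w δ s * H s - (phi (s / δ) + 1/3) * H s)
        = (∫ s in Ioc 0 t, w δ s * H s) - ∫ s in Ioc 0 t, (phi (s / δ) + 1/3) * H s :=
      integral_sub (hWInt δ hδ) (hPsiInt δ)
    have e2 : ∫ s in Ioc 0 t, (phi (s / δ) + 1/3) * H s
        = (∫ s in Ioc 0 t, phi (s / δ) * H s) + (1/3) * ∫ s in Ioc 0 t, H s := by
      rw [← integral_const_mul, ← integral_add (hPhiInt δ) ((hInt.const_mul (1/3)))]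
      exact integral_congr_ae (Eventually.of_forall fun s => by ring)
    have e3 : (∫ s, phi (s / δ) * f s) = ∫ s in Ioc 0 t, phi (s / δ) * H s := by
      rw [← integral_indicator measurableSet_Ioc]
      congr 1
      funext s
      rw [hf]
      by_cases hs : s ∈ Ioc 0 t
      · simp [indicator_of_mem hs]
      · simp [indicator_of_notMem hs]
    rw [e1, e2, e3]
    ring
  -- the remainder term tends to zero
  set G : ℝ → ℝ := (Ioc 0 t).indicator (fun s => 2 * ‖H s‖) with hG
  have hGint : Integrable G :=
    IntegrableOn.integrable_indicator (hInt.norm.const_mul 2) measurableSet_Ioc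
  have hmeasG : Tendsto (fun δ : ℝ => volume (Ioc (t - δ) t)) (nhdsWithin 0 (Ioi 0)) (nhds 0) := by
    have h1 : ∀ δ : ℝ, volume (Ioc (t - δ) t) = ENNReal.ofReal δ := by
      intro δ; rw [Real.volume_Ioc]; congr 1; ring
    simp_rw [h1]
    have h2 : Tendsto (fun δ : ℝ => ENNReal.ofReal δ) (nhds 0) (nhds 0) := by
      have := (ENNReal.continuous_ofReal.tendsto 0)
      simpa using this
    exact h2.mono_left nhdsWithin_le_nhds
  have hB : Tendsto (fun δ : ℝ => ∫ s in Ioc (t - δ) t, G s) (nhdsWithin 0 (Ioi 0)) (nhds 0) :=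
    hGint.hasFiniteIntegral.tendsto_setIntegral_nhds_zero hmeasG
  have hRbound : ∀ᶠ δ in nhdsWithin (0:ℝ) (Ioi 0),
      ‖∫ s in Ioc 0 t, (w δ s * H s - (phi (s / δ) + 1/3) * H s)‖
        ≤ ∫ s in Ioc (t - δ) t, G s := by
    filter_upwards [self_mem_nhdsWithin] with δ (hδ : δ ∈ Ioi 0)
    rw [mem_Ioi] at hδ
    have hq : EqOn (fun s => w δ s * H s - (phi (s / δ) + 1/3) * H s)
        ((Ioc (t - δ) t).indicator
          (fun s => w δ s * H s - (phi (s / δ) + 1/3) * H s)) (Ioc 0 t) := by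
      intro s hs
      by_cases hmem : s ∈ Ioc (t - δ) t
      · rw [indicator_of_mem hmem]
      · rw [indicator_of_notMem hmem]
        have hsle : s ≤ t - δ := by
          by_contra hcon
          push_neg at hcon
          exact hmem ⟨hcon, hs.2⟩
        have hm := hmin δ hδ s hs.1 hsle
        show w δ s * H s - (phi (s / δ) + 1/3) * H s = 0
        have hwval : w δ s = phi (s / δ) + 1/3 := by
          rw [hw]
          simp only
          rw [hm, hpsi δ hδ.ne' s]
        rw [hwval]; ring
    rw [setIntegral_congr_fun measurableSet_Ioc hq,
      setIntegral_indicator measurableSet_Ioc]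
    have hS : MeasurableSet (Ioc (0:ℝ) t ∩ Ioc (t - δ) t) :=
      measurableSet_Ioc.inter measurableSet_Ioc
    calc ‖∫ s in Ioc 0 t ∩ Ioc (t - δ) t, (w δ s * H s - (phi (s / δ) + 1/3) * H s)‖
        ≤ ∫ s in Ioc 0 t ∩ Ioc (t - δ) t, ‖w δ s * H s - (phi (s / δ) + 1/3) * H s‖ :=
          norm_integral_le_integral_norm _
      _ ≤ ∫ s in Ioc 0 t ∩ Ioc (t - δ) t, G s := by
          apply setIntegral_mono_on
          · exact IntegrableOn.mono_set (((hWInt δ hδ).sub (hPsiInt δ)).norm) inter_subset_left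
          · exact hGint.integrableOn
          · exact hS
          · intro s hsS
            have hs : s ∈ Ioc 0 t := hsS.1
            rw [hG]
            rw [indicator_of_mem hs]
            have h0 : 0 ≤ w δ s := by rw [hw]; positivity
            have h1 : w δ s ≤ 1 := hwle δ hδ s hs
            have h2 := hpsib (s / δ)
            rw [Real.norm_eq_abs, Real.norm_eq_abs]
            have e : w δ s * H s - (phi (s / δ) + 1/3) * H s
                = (w δ s - (phi (s / δ) + 1/3)) * H s := by ring
            rw [e, abs_mul]
            have h3 : |w δ s - (phi (s / δ) + 1/3)| ≤ 2 := by
              rw [abs_le]; constructor <;> [linarith [h2.2]; linarith [h2.1]]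
            nlinarith [abs_nonneg (H s), abs_nonneg (w δ s - (phi (s / δ) + 1/3))]
      _ ≤ ∫ s in Ioc (t - δ) t, G s := by
          apply setIntegral_mono_set hGint.integrableOn
          · apply Eventually.of_forall
            intro s
            rw [hG]
            by_cases hs : s ∈ Ioc 0 t
            · rw [indicator_of_mem hs]; positivity
            · rw [indicator_of_notMem hs]
              exact le_rfl
          · exact (inter_subset_right).eventuallyLE
  have hR : Tendsto (fun δ : ℝ => ∫ s in Ioc 0 t,
      (w δ s * H s - (phi (s / δ) + 1/3) * H s)) (nhdsWithin 0 (Ioi 0)) (nhds 0) :=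
    squeeze_zero_norm' hRbound hB
  have hsum := (hA.add hR).add (tendsto_const_nhds
    (x := (1/3) * ∫ s in Ioc 0 t, H s) (f := nhdsWithin (0:ℝ) (Ioi 0)))
  have hval : (0:ℝ) + 0 + (1/3) * ∫ s in Ioc 0 t, H s
      = (1/3) * ∫ s in (0:ℝ)..t, H s := by
    rw [intervalIntegral.integral_of_le ht.le]; ring
  rw [hval] at hsum
  apply Tendsto.congr' _ hsum
  filter_upwards [self_mem_nhdsWithin] with δ (hδ : δ ∈ Ioi 0)
  exact (hdecomp δ hδ).symm
end

section
/- Fix T > 0 and let g : [0, T] → ℝ be continuous. For δ > 0 and 0 ≤ s ≤ t ≤ T define τ_δ^t(s) = min(t, (⌊s/δ⌋ + 1)δ) − s. Then sup_{t ∈ [0, T]} | ∫_0^t (2 τ_δ^t(s)/δ − 1) g(s) ds | → 0 as δ → 0⁺. -/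
open MeasureTheory Filter Set

lemma integral_phi_zero (a c δ : ℝ) (hδ : 0 < δ) (h : c - a = δ) :
    ∫ s in a..c, (2 * (c - s) / δ - 1) = 0 := by
  have h1 : (fun s : ℝ => 2 * (c - s) / δ - 1)
      = fun s => (2 * c / δ - 1) + (-(2 / δ)) * s := by
    funext s; field_simp; ring
  rw [h1, intervalIntegral.integral_add intervalIntegrable_const
    ((by fun_prop : Continuous fun s : ℝ => -(2 / δ) * s).intervalIntegrable _ _),
    intervalIntegral.integral_const, intervalIntegral.integral_const_mul, integral_id]
  have hδ' : δ ≠ 0 := hδ.ne'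
  have hc : c = a + δ := by linarith
  subst hc
  field_simp
  ring_nf
  field_simp
  ring

lemma key_bound (T : ℝ) (hT : 0 < T) (g : ℝ → ℝ) (hg : ContinuousOn g (Icc 0 T))
    (M ε η δ : ℝ) (hM : ∀ x ∈ Icc (0:ℝ) T, |g x| ≤ M)
    (hmod : ∀ u ∈ Icc (0:ℝ) T, ∀ v ∈ Icc (0:ℝ) T, |u - v| ≤ η → |g u - g v| ≤ ε)
    (hδ : 0 < δ) (hδη : δ ≤ η) (t : ℝ) (ht : t ∈ Icc (0:ℝ) T) :
    |∫ s in (0:ℝ)..t,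
        (2 * (min t (((⌊s / δ⌋ : ℤ) + 1 : ℝ) * δ) - s) / δ - 1) * g s| ≤ T * ε + M * δ := by
  obtain ⟨ht0, htT⟩ := ht
  have hM0 : 0 ≤ M := le_trans (abs_nonneg _) (hM 0 ⟨le_rfl, hT.le⟩)
  have hε0 : 0 ≤ ε := by
    have := hmod 0 ⟨le_rfl, hT.le⟩ 0 ⟨le_rfl, hT.le⟩ (by simpa using le_trans hδ.le hδη)
    simpa using le_trans (abs_nonneg _) this
  set f : ℝ → ℝ := fun s =>
    (2 * (min t (((⌊s / δ⌋ : ℤ) + 1 : ℝ) * δ) - s) / δ - 1) * g s with hf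
  set n : ℕ := (⌊t / δ⌋).toNat with hn
  have hfl : ((n : ℤ) : ℝ) = (⌊t / δ⌋ : ℝ) := by
    rw [hn, Int.toNat_of_nonneg (Int.floor_nonneg.2 (by positivity))]
  have hncast : ((n : ℕ) : ℝ) = (⌊t / δ⌋ : ℝ) := by rw [← hfl]; push_cast; ring
  have hnd : (n : ℝ) * δ ≤ t := by
    have h1 : (n : ℝ) ≤ t / δ := by rw [hncast]; exact Int.floor_le _
    exact (le_div_iff₀ hδ).1 h1
  have htn : t < ((n : ℝ) + 1) * δ := by
    have h1 : t / δ < (n : ℝ) + 1 := by rw [hncast]; exact Int.lt_floor_add_one _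
    exact (div_lt_iff₀ hδ).1 h1
  -- pointwise bound on [0, t]
  have hφ : ∀ s ∈ Icc (0:ℝ) t,
      |2 * (min t (((⌊s / δ⌋ : ℤ) + 1 : ℝ) * δ) - s) / δ - 1| ≤ 1 := by
    intro s hs
    have h1 : s ≤ min t (((⌊s / δ⌋ : ℤ) + 1 : ℝ) * δ) :=
      le_min hs.2 ((div_lt_iff₀ hδ).1 (Int.lt_floor_add_one (s / δ))).le
    have h2 : min t (((⌊s / δ⌋ : ℤ) + 1 : ℝ) * δ) - s ≤ δ := by
      have h4 : ((⌊s / δ⌋ : ℤ) : ℝ) * δ ≤ s := (le_div_iff₀ hδ).1 (Int.floor_le _)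
      have := min_le_right t (((⌊s / δ⌋ : ℤ) + 1 : ℝ) * δ)
      nlinarith
    have hu1 : 0 ≤ (min t (((⌊s / δ⌋ : ℤ) + 1 : ℝ) * δ) - s) / δ := div_nonneg (by linarith) hδ.le
    have hu2 : (min t (((⌊s / δ⌋ : ℤ) + 1 : ℝ) * δ) - s) / δ ≤ 1 := by
      rw [div_le_one hδ]; exact h2
    have hrw : 2 * (min t (((⌊s / δ⌋ : ℤ) + 1 : ℝ) * δ) - s) / δ
        = 2 * ((min t (((⌊s / δ⌋ : ℤ) + 1 : ℝ) * δ) - s) / δ) := by ring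
    rw [hrw, abs_le]
    constructor <;> linarith
  have hfbd : ∀ s ∈ Icc (0:ℝ) t, |f s| ≤ M := by
    intro s hs
    calc |f s| = |2 * (min t (((⌊s / δ⌋ : ℤ) + 1 : ℝ) * δ) - s) / δ - 1| * |g s| :=
          abs_mul _ _
      _ ≤ 1 * M :=
          mul_le_mul (hφ s hs) (hM s ⟨hs.1, le_trans hs.2 htT⟩) (abs_nonneg _) zero_le_one
      _ = M := one_mul M
  -- integrability
  have hmeas : AEStronglyMeasurable f (volume.restrict (Ioc 0 t)) := by
    have hfloor : Measurable fun s : ℝ => ((⌊s / δ⌋ : ℤ) : ℝ) :=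
      measurable_from_top.comp (Int.measurable_floor.comp (measurable_id.div_const δ))
    have h1 : Measurable fun s : ℝ =>
        2 * (min t (((⌊s / δ⌋ : ℤ) + 1 : ℝ) * δ) - s) / δ - 1 := by fun_prop
    have h2 : AEStronglyMeasurable g (volume.restrict (Ioc 0 t)) :=
      (hg.aestronglyMeasurable measurableSet_Icc).mono_measure
        (Measure.restrict_mono (Ioc_subset_Icc_self.trans (Icc_subset_Icc_right htT)) le_rfl)
    exact (h1.aestronglyMeasurable).mul h2
  have hInt : IntegrableOn f (Ioc 0 t) := by
    refine ⟨hmeas, HasFiniteIntegral.restrict_of_bounded (C := M) measure_Ioc_lt_top ?_⟩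
    refine (ae_restrict_iff' measurableSet_Ioc).mpr (ae_of_all _ fun s hs => ?_)
    rw [Real.norm_eq_abs]
    exact hfbd s ⟨hs.1.le, hs.2⟩
  have hII : ∀ a b : ℝ, 0 ≤ a → a ≤ b → b ≤ t → IntervalIntegrable f volume a b := by
    intro a b ha hab hbt
    rw [intervalIntegrable_iff_integrableOn_Ioc_of_le hab]
    exact hInt.mono_set (Ioc_subset_Ioc ha hbt)
  -- per-interval estimate
  have hkey : ∀ k : ℕ, k < n →
      |∫ s in ((k:ℝ)*δ)..(((k:ℝ)+1)*δ), f s| ≤ ε * δ := by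
    intro k hk
    have hk1 : ((k:ℝ)+1)*δ ≤ (n:ℝ)*δ := by
      have h : ((k:ℝ)+1) ≤ (n:ℝ) := by exact_mod_cast Nat.succ_le_of_lt hk
      nlinarith
    have hkt : ((k:ℝ)+1)*δ ≤ t := le_trans hk1 hnd
    have hk0 : (0:ℝ) ≤ (k:ℝ)*δ := by positivity
    have hab : (k:ℝ)*δ ≤ ((k:ℝ)+1)*δ := by nlinarith
    set a : ℝ := (k:ℝ)*δ with ha_def
    set b : ℝ := ((k:ℝ)+1)*δ with hb_def
    set c : ℝ := g a with hc_def
    have hba : b - a = δ := by rw [ha_def, hb_def]; ring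
    have hcongr : ∫ s in a..b, f s = ∫ s in a..b, (2*(b - s)/δ - 1) * g s := by
      apply intervalIntegral.integral_congr_ae
      have hae : ∀ᵐ s : ℝ, s ≠ b := by
        rw [ae_iff]
        simp only [ne_eq, not_not, setOf_eq_eq_singleton]
        exact measure_singleton b
      filter_upwards [hae] with s hsne hs
      rw [Set.uIoc_of_le hab] at hs
      have hslt : s < b := lt_of_le_of_ne hs.2 hsne
      have hfloor : (⌊s/δ⌋ : ℤ) = (k : ℤ) := by
        rw [Int.floor_eq_iff]
        constructor
        · push_cast
          rw [le_div_iff₀ hδ]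
          exact le_of_lt hs.1
        · push_cast
          rw [div_lt_iff₀ hδ]
          exact hslt
      have hmin : min t (((k:ℝ) + 1) * δ) = b := min_eq_right hkt
      show (2 * (min t (((⌊s / δ⌋ : ℤ) + 1 : ℝ) * δ) - s) / δ - 1) * g s = _
      rw [hfloor]
      push_cast
      rw [hmin]
    have hφcont : Continuous fun s : ℝ => 2*(b - s)/δ - 1 := by fun_prop
    have hgcont : ContinuousOn g (uIcc a b) := by
      apply hg.mono
      rw [uIcc_of_le hab]
      intro x hx
      exact ⟨le_trans hk0 hx.1, le_trans hx.2 (le_trans hkt htT)⟩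
    have hint1 : IntervalIntegrable (fun s => (2*(b-s)/δ - 1)*(g s - c)) volume a b :=
      (hφcont.continuousOn.mul (hgcont.sub continuousOn_const)).intervalIntegrable
    have hint2 : IntervalIntegrable (fun s => (2*(b-s)/δ - 1)*c) volume a b :=
      ((hφcont.mul continuous_const).intervalIntegrable _ _)
    have hsplit2 : ∫ s in a..b, (2*(b - s)/δ - 1) * g s
        = (∫ s in a..b, (2*(b-s)/δ - 1)*(g s - c)) + ∫ s in a..b, (2*(b-s)/δ - 1)*c := by
      rw [← intervalIntegral.integral_add hint1 hint2]
      congr 1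
      funext s
      ring
    have hzero : ∫ s in a..b, (2*(b-s)/δ - 1)*c = 0 := by
      rw [intervalIntegral.integral_mul_const, integral_phi_zero a b δ hδ hba, zero_mul]
    have hbound : |∫ s in a..b, (2*(b-s)/δ - 1)*(g s - c)| ≤ ε * δ := by
      have hnorm := intervalIntegral.norm_integral_le_of_norm_le_const (C := ε)
        (f := fun s => (2*(b-s)/δ - 1)*(g s - c)) (a := a) (b := b) ?_
      · rw [Real.norm_eq_abs] at hnorm
        calc |∫ s in a..b, (2*(b-s)/δ - 1)*(g s - c)| ≤ ε * |b - a| := hnorm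
          _ = ε * δ := by rw [hba, abs_of_nonneg hδ.le]
      · intro s hs
        rw [Set.uIoc_of_le hab] at hs
        have hsa : a < s := hs.1
        have hsb : s ≤ b := hs.2
        have hφ1 : |2*(b-s)/δ - 1| ≤ 1 := by
          have hu1 : 0 ≤ (b - s)/δ := div_nonneg (by linarith) hδ.le
          have hu2 : (b - s)/δ ≤ 1 := by rw [div_le_one hδ]; linarith
          have hrw : 2*(b-s)/δ = 2*((b-s)/δ) := by ring
          rw [hrw, abs_le]
          constructor <;> linarith
        have hsIcc : s ∈ Icc (0:ℝ) T := ⟨le_trans hk0 hsa.le, le_trans hsb (le_trans hkt htT)⟩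
        have haIcc : a ∈ Icc (0:ℝ) T := ⟨hk0, le_trans (le_trans hab hkt) htT⟩
        have hg1 : |g s - c| ≤ ε := by
          refine hmod s hsIcc a haIcc ?_
          rw [abs_of_nonneg (by linarith)]
          linarith
        rw [Real.norm_eq_abs, abs_mul]
        calc |2*(b-s)/δ - 1| * |g s - c| ≤ 1 * ε :=
              mul_le_mul hφ1 hg1 (abs_nonneg _) zero_le_one
          _ = ε := one_mul ε
    rw [hcongr, hsplit2, hzero, add_zero]
    exact hbound
  -- last piece
  have hlast : |∫ s in ((n:ℝ)*δ)..t, f s| ≤ M * δ := by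
    have hnorm := intervalIntegral.norm_integral_le_of_norm_le_const (C := M)
      (f := f) (a := (n:ℝ)*δ) (b := t) ?_
    · rw [Real.norm_eq_abs] at hnorm
      calc |∫ s in ((n:ℝ)*δ)..t, f s| ≤ M * |t - (n:ℝ)*δ| := hnorm
        _ ≤ M * δ := by
            apply mul_le_mul_of_nonneg_left _ hM0
            rw [abs_of_nonneg (by linarith)]
            linarith
    · intro s hs
      rw [Set.uIoc_of_le hnd] at hs
      rw [Real.norm_eq_abs]
      exact hfbd s ⟨le_trans (by positivity) hs.1.le, hs.2⟩
  -- assemble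
  have hsum : ∫ s in (0:ℝ)..t, f s
      = (∑ k ∈ Finset.range n, ∫ s in ((k:ℝ)*δ)..(((k:ℝ)+1)*δ), f s)
        + ∫ s in ((n:ℝ)*δ)..t, f s := by
    have h1 : ∑ k ∈ Finset.range n,
        ∫ s in (((k:ℕ):ℝ)*δ)..((((k+1:ℕ)):ℝ)*δ), f s
        = ∫ s in (((0:ℕ):ℝ)*δ)..(((n:ℕ):ℝ)*δ), f s := by
      apply intervalIntegral.sum_integral_adjacent_intervals (a := fun k : ℕ => ((k:ℕ):ℝ)*δ)
      intro k hk
      apply hII _ _ (by positivity) (by push_cast; nlinarith)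
      have : ((k:ℝ)+1) ≤ (n:ℝ) := by exact_mod_cast Nat.succ_le_of_lt hk
      push_cast
      nlinarith
    simp only [Nat.cast_add, Nat.cast_one, Nat.cast_zero, zero_mul] at h1
    rw [h1]
    exact (intervalIntegral.integral_add_adjacent_intervals
      (hII 0 ((n:ℝ)*δ) le_rfl (by positivity) hnd)
      (hII ((n:ℝ)*δ) t (by positivity) hnd le_rfl)).symm
  calc |∫ s in (0:ℝ)..t, f s|
      ≤ (∑ k ∈ Finset.range n, |∫ s in ((k:ℝ)*δ)..(((k:ℝ)+1)*δ), f s|)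
        + |∫ s in ((n:ℝ)*δ)..t, f s| := by
        rw [hsum]
        exact (abs_add_le _ _).trans (add_le_add_left (Finset.abs_sum_le_sum_abs _ _) _)
    _ ≤ (∑ _k ∈ Finset.range n, ε * δ) + M * δ :=
        add_le_add (Finset.sum_le_sum fun k hk => hkey k (Finset.mem_range.1 hk)) hlast
    _ = (n : ℝ) * (ε * δ) + M * δ := by
        rw [Finset.sum_const, Finset.card_range, nsmul_eq_mul]
    _ ≤ T * ε + M * δ := by nlinarith

/-- Uniform-in-time convergence `sup_{t ∈ [0,T]} B^δ_t → 0` from the proof of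
Theorem 4.1: with `τ_δ^t(s) = min(t, (⌊s/δ⌋ + 1)δ) - s`, for continuous `g` on `[0, T]`,
`sup_{t ∈ [0,T]} |∫_0^t (2 τ_δ^t(s)/δ - 1) g(s) ds| → 0` as `δ → 0⁺`. -/
theorem tendsto_sup_integral_two_tau_div_delta_sub_one
    (T : ℝ) (hT : 0 < T) (g : ℝ → ℝ) (hg : ContinuousOn g (Icc 0 T)) :
    Tendsto
      (fun δ : ℝ =>
        ⨆ t ∈ Icc (0 : ℝ) T,
          |∫ s in (0 : ℝ)..t,
            (2 * (min t (((⌊s / δ⌋ : ℤ) + 1 : ℝ) * δ) - s) / δ - 1) * g s|)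
      (nhdsWithin 0 (Ioi 0))
      (nhds 0) := by
  obtain ⟨M, hMn⟩ := isCompact_Icc.exists_bound_of_continuousOn hg
  have hM : ∀ x ∈ Icc (0:ℝ) T, |g x| ≤ M := fun x hx => by
    rw [← Real.norm_eq_abs]; exact hMn x hx
  have hM0 : 0 ≤ M := le_trans (abs_nonneg _) (hM 0 ⟨le_rfl, hT.le⟩)
  rw [Metric.tendsto_nhdsWithin_nhds]
  intro ε hε
  set ε' : ℝ := ε / (2*(T+1)) with hε'def
  have hε' : 0 < ε' := by positivity
  have hUC := isCompact_Icc.uniformContinuousOn_of_continuous hg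
  rw [Metric.uniformContinuousOn_iff] at hUC
  obtain ⟨η, hη, hηc⟩ := hUC ε' hε'
  refine ⟨min (η/2) (ε/(2*(M+1))), by positivity, ?_⟩
  intro δ hδIoi hdist
  rw [Real.dist_eq, sub_zero] at hdist
  have hδ0 : 0 < δ := hδIoi
  rw [abs_of_pos hδ0] at hdist
  have hδη : δ ≤ η/2 := le_of_lt (lt_of_lt_of_le hdist (min_le_left _ _))
  have hδε : δ < ε/(2*(M+1)) := lt_of_lt_of_le hdist (min_le_right _ _)
  have hmod : ∀ u ∈ Icc (0:ℝ) T, ∀ v ∈ Icc (0:ℝ) T, |u - v| ≤ η/2 → |g u - g v| ≤ ε' := by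
    intro u hu v hv huv
    have h := hηc u hu v hv (by rw [Real.dist_eq]; linarith)
    rw [Real.dist_eq] at h
    exact h.le
  have hbd := fun t ht => key_bound T hT g hg M ε' (η/2) δ hM hmod hδ0 hδη t ht
  simp only [Real.dist_eq, sub_zero]
  have hbdpos : 0 ≤ T * ε' + M * δ :=
    add_nonneg (by positivity) (mul_nonneg hM0 hδ0.le)
  have hSle : (⨆ t ∈ Icc (0:ℝ) T,
      |∫ s in (0 : ℝ)..t,
        (2 * (min t (((⌊s / δ⌋ : ℤ) + 1 : ℝ) * δ) - s) / δ - 1) * g s|) ≤ T * ε' + M * δ := by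
    refine Real.iSup_le (fun t => ?_) hbdpos
    exact Real.iSup_le (fun ht => hbd t ht) hbdpos
  have hS0 : 0 ≤ ⨆ t ∈ Icc (0:ℝ) T,
      |∫ s in (0 : ℝ)..t,
        (2 * (min t (((⌊s / δ⌋ : ℤ) + 1 : ℝ) * δ) - s) / δ - 1) * g s| :=
    Real.iSup_nonneg fun t => Real.iSup_nonneg fun _ => abs_nonneg _
  rw [abs_of_nonneg hS0]
  have h1 : T * ε' < ε/2 := by
    have heq : ε' * (2*(T+1)) = ε := by rw [hε'def]; field_simp
    nlinarith
  have h2 : M * δ < ε/2 := by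
    have hcpos : 0 < ε/(2*(M+1)) := by positivity
    have heq : (ε/(2*(M+1))) * (2*(M+1)) = ε := by field_simp
    nlinarith [mul_le_mul_of_nonneg_left hδε.le hM0]
  linarith
end
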